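/- Let q and r be integers with 0 < r < q, and let R be the submonoid of ℤ² (written additively) generated by (1,0), (0,1), and (r, r−q). Then the saturation of R inside ℤ², i.e. the set of x ∈ ℤ² with n·x ∈ R for some positive integer n, equals {(a,b) ∈ ℤ² : a ≥ 0 and r·b ≥ (r−q)·a}. -/

import Mathlib

/-- For `0 < r < q`, the saturation inside `ℤ²` of the submonoid generated by
`(1,0)`, `(0,1)`, `(r, r-q)` is `{(a,b) : a ≥ 0 ∧ r·b ≥ (r-q)·a}`. -/
theorem saturation_of_puncturing_monoid (q r : ℤ) (hr : 0 < r) (hrq : r < q) :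
    {x : ℤ × ℤ | ∃ n : ℕ, 0 < n ∧
        n • x ∈ AddSubmonoid.closure ({(1, 0), (0, 1), (r, r - q)} : Set (ℤ × ℤ))} =
      {x : ℤ × ℤ | 0 ≤ x.1 ∧ (r - q) * x.1 ≤ r * x.2} := by
  ext x
  simp only [Set.mem_setOf_eq]
  constructor
  · rintro ⟨n, hn, hmem⟩
    have key' : ∀ y ∈ AddSubmonoid.closure ({(1, 0), (0, 1), (r, r - q)} : Set (ℤ × ℤ)),
        0 ≤ y.1 ∧ (r - q) * y.1 ≤ r * y.2 := by
      intro y hy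
      induction hy using AddSubmonoid.closure_induction with
      | mem y hy =>
        rcases hy with h | h | h <;> subst h <;> constructor <;> simp <;> nlinarith
      | zero => simp
      | add a b _ _ ha hb =>
        exact ⟨by simpa using add_nonneg ha.1 hb.1, by
          have := add_le_add ha.2 hb.2
          simpa [mul_add] using this⟩
    have key := key' _ hmem
    have hn' : (0 : ℤ) < n := by exact_mod_cast hn
    have h1 : (n • x).1 = (n : ℤ) * x.1 := by simp [nsmul_eq_mul]
    have h2 : (n • x).2 = (n : ℤ) * x.2 := by simp [nsmul_eq_mul]
    rw [h1, h2] at key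
    constructor
    · nlinarith [key.1]
    · nlinarith [key.2]
  · rintro ⟨h1, h2⟩
    refine ⟨r.toNat, by omega, ?_⟩
    have hx : r.toNat • x = x.1.toNat • ((r, r - q) : ℤ × ℤ)
        + (r * x.2 - (r - q) * x.1).toNat • ((0, 1) : ℤ × ℤ) := by
      have e1 : ((r.toNat : ℤ)) = r := Int.toNat_of_nonneg hr.le
      have e2 : ((x.1.toNat : ℤ)) = x.1 := Int.toNat_of_nonneg h1
      have e3 : ((r * x.2 - (r - q) * x.1).toNat : ℤ) = r * x.2 - (r - q) * x.1 :=
        Int.toNat_of_nonneg (by linarith)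
      ext
      · simp only [Prod.fst_add, Prod.smul_fst]
        simp only [nsmul_eq_mul, e1, e2, e3]
        ring
      · simp only [Prod.snd_add, Prod.smul_snd]
        simp only [nsmul_eq_mul, e1, e2, e3]
        ring
    rw [hx]
    exact add_mem
      (AddSubmonoid.nsmul_mem _ (AddSubmonoid.subset_closure (by simp)) _)
      (AddSubmonoid.nsmul_mem _ (AddSubmonoid.subset_closure (by simp)) _)
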